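/- Let n ≥ 3 and define F(x₁,…,xₙ) = (x₁ + 2x₂ + 3x₃ + … + n·xₙ)/(x₁ + … + xₙ) on the set where x₁ + … + xₙ ≠ 0. Then F is irreducible on every nonempty connected open subset U of this set: for every permutation σ of {1,…,n} and every k with 2 ≤ k ≤ n−1, there exist no C² functions h of k variables and g of n−k+1 variables such that F(x₁,…,xₙ) = g(h(x_{σ(1)},…,x_{σ(k)}), x_{σ(k+1)},…,x_{σ(n)}) for all x ∈ U. -/

import Mathlib

open Filter

private lemma aux_chain {k r : ℕ} (h : (Fin k → ℝ) → ℝ) (g : ℝ × (Fin r → ℝ) → ℝ)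
    (hh : Differentiable ℝ h) (hg : Differentiable ℝ g)
    (v e : Fin k → ℝ) (w : Fin r → ℝ) :
    HasDerivAt (fun s : ℝ => g (h (v + s • e), w))
      (fderiv ℝ h v e * fderiv ℝ g (h v, w) (1, 0)) 0 := by
  have h1 : HasDerivAt (fun s : ℝ => v + s • e) e 0 := by
    simpa using ((hasDerivAt_id (0:ℝ)).smul_const e).const_add v
  have h2 : HasDerivAt (fun s : ℝ => h (v + s • e)) (fderiv ℝ h v e) 0 := by
    have := ((hh (v + (0:ℝ) • e)).hasFDerivAt).comp_hasDerivAt 0 h1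
    rw [zero_smul, add_zero] at this
    exact this
  have h3 : HasDerivAt (fun s : ℝ => (h (v + s • e), w)) (fderiv ℝ h v e, (0 : Fin r → ℝ)) 0 :=
    h2.prodMk (hasDerivAt_const 0 w)
  have h4 := ((hg (h (v + (0:ℝ) • e), w)).hasFDerivAt).comp_hasDerivAt 0 h3
  simp only [zero_smul, add_zero] at h4
  have hsm : ((fderiv ℝ h v e : ℝ), (0 : Fin r → ℝ))
      = (fderiv ℝ h v e) • ((1:ℝ), (0 : Fin r → ℝ)) := by
    simp [Prod.smul_def]
  rw [hsm, ContinuousLinearMap.map_smul, smul_eq_mul] at h4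
  exact h4

private lemma aux_gamma {r : ℕ} (g : ℝ × (Fin r → ℝ) → ℝ) (hg : ContDiff ℝ 2 g)
    (y : ℝ) (w W : Fin r → ℝ) :
    DifferentiableAt ℝ (fun u : ℝ => fderiv ℝ g (y, w + u • W) ((1:ℝ), (0 : Fin r → ℝ))) 0 := by
  have h1 : Differentiable ℝ (fderiv ℝ g) :=
    (hg.fderiv_right (m := 1) (by norm_num)).differentiable one_ne_zero
  have h2 : Differentiable ℝ (fun u : ℝ => ((y, w + u • W) : ℝ × (Fin r → ℝ))) :=
    (differentiable_const y).prodMk ((differentiable_id.smul_const W).const_add w)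
  exact ((h1.comp h2).clm_apply (differentiable_const _)).differentiableAt

private lemma abstract_key {k r : ℕ}
    (h : (Fin k → ℝ) → ℝ) (g : ℝ × (Fin r → ℝ) → ℝ)
    (hh : ContDiff ℝ 2 h) (hg : ContDiff ℝ 2 g)
    (v E0 E1 : Fin k → ℝ) (w W : Fin r → ℝ)
    (S T ca cb cm : ℝ) (hS : S ≠ 0) (hab : ca ≠ cb)
    (ε : ℝ) (hε : 0 < ε)
    (heq : ∀ s t u : ℝ, |s| < ε → |t| < ε → |u| < ε →
      (T + ca * s + cb * t + cm * u) / (S + s + t + u)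
        = g (h (v + s • E0 + t • E1), w + u • W)) :
    T = cm * S := by
  have hhd : Differentiable ℝ h := hh.differentiable (by norm_num)
  have hgd : Differentiable ℝ g := hg.differentiable (by norm_num)
  set δ : ℝ := min ε (|S|/2) with hδdef
  have hδ : 0 < δ := lt_min hε (by positivity)
  have hδε : δ ≤ ε := min_le_left _ _
  set γ : ℝ → ℝ := fun u => fderiv ℝ g (h v, w + u • W) ((1:ℝ), (0 : Fin r → ℝ)) with hγdef
  set Dh0 : ℝ := fderiv ℝ h v E0
  set Dh1 : ℝ := fderiv ℝ h v E1
  -- explicit derivative in s, for |u| < δ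
  have hden : ∀ u : ℝ, |u| < δ → S + u ≠ 0 := by
    intro u hu
    have h1 : |u| < |S| := lt_of_lt_of_le (lt_of_lt_of_le hu (min_le_right _ _)) (by linarith [abs_nonneg S])
    intro hc
    have : u = -S := by linarith
    rw [this, abs_neg] at h1; exact absurd h1 (lt_irrefl _)
  have hA : ∀ (e : Fin k → ℝ) (c : ℝ), (∀ s t u : ℝ, |s| < ε → |t| < ε → |u| < ε →
      (T + c * s + cm * u) / (S + s + u) = g (h (v + s • e), w + u • W)) →
      ∀ u : ℝ, |u| < δ →
      fderiv ℝ h v e * γ u = (c * (S + u) - (T + cm * u)) / (S + u)^2 := by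
    intro e c heq' u hu
    have huε : |u| < ε := lt_of_lt_of_le hu hδε
    have hne : S + u ≠ 0 := hden u hu
    -- the composed function has the derivative fderiv h v e * γ u at 0
    have hcomp := aux_chain h g hhd hgd v e (w + u • W)
    -- the explicit function has the explicit derivative
    have hnum : HasDerivAt (fun s : ℝ => T + c * s + cm * u) c 0 := by
      have : HasDerivAt (fun s : ℝ => c * s) c 0 := by
        simpa using (hasDerivAt_id (0:ℝ)).const_mul c
      have h2 := (this.const_add T).add_const (cm * u)
      convert h2 using 2
    have hdenf : HasDerivAt (fun s : ℝ => S + s + u) 1 0 := by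
      have : HasDerivAt (fun s : ℝ => S + s) 1 0 := by
        simpa using (hasDerivAt_id (0:ℝ)).const_add S
      simpa using this.add_const u
    have hdiv : HasDerivAt (fun s : ℝ => (T + c * s + cm * u) / (S + s + u)) _ 0 := hnum.div hdenf (by simpa using hne)
    -- they agree near 0
    have hev : (fun s : ℝ => (T + c * s + cm * u) / (S + s + u))
        =ᶠ[nhds (0:ℝ)] (fun s : ℝ => g (h (v + s • e), w + u • W)) := by
      filter_upwards [Metric.ball_mem_nhds (0:ℝ) hε] with s hs
      exact heq' s 0 u (by simpa [Real.dist_eq] using hs) (by simpa using hε) huε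
    have e1 : deriv (fun s : ℝ => (T + c * s + cm * u) / (S + s + u)) 0
        = fderiv ℝ h v e * γ u := by
      rw [hev.deriv_eq]; exact hcomp.deriv
    rw [hdiv.deriv] at e1
    rw [← e1]
    congr 1 <;> ring
  -- specialize to E0 / ca and E1 / cb
  have heq0 : ∀ s t u : ℝ, |s| < ε → |t| < ε → |u| < ε →
      (T + ca * s + cm * u) / (S + s + u) = g (h (v + s • E0), w + u • W) := by
    intro s t u hs ht hu
    have := heq s 0 u hs (by simpa using hε) hu
    simp only [mul_zero, add_zero, zero_smul] at this
    convert this using 2 <;> ring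
  have heq1 : ∀ s t u : ℝ, |s| < ε → |t| < ε → |u| < ε →
      (T + cb * s + cm * u) / (S + s + u) = g (h (v + s • E1), w + u • W) := by
    intro s t u hs ht hu
    have := heq 0 s u (by simpa using hε) hs hu
    simp only [mul_zero, add_zero, zero_smul, add_zero] at this
    convert this using 2 <;> ring
  have hA0 := hA E0 ca heq0
  have hA1 := hA E1 cb heq1
  -- derivative of u ↦ (c*(S+u) - (T+cm*u))/(S+u)^2 at 0
  have hder : ∀ c : ℝ, HasDerivAt (fun u : ℝ => (c * (S + u) - (T + cm * u)) / (S + u)^2)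
      (((c - cm) * S^2 - (c * S - T) * (2 * S)) / (S^2)^2) 0 := by
    intro c
    have hnum : HasDerivAt (fun u : ℝ => c * (S + u) - (T + cm * u)) (c - cm) 0 := by
      have h1 : HasDerivAt (fun u : ℝ => c * (S + u)) c 0 := by
        simpa using ((hasDerivAt_id (0:ℝ)).const_add S).const_mul c
      have h2 : HasDerivAt (fun u : ℝ => T + cm * u) cm 0 := by
        simpa using ((hasDerivAt_id (0:ℝ)).const_mul cm).const_add T
      exact h1.sub h2
    have hdf : HasDerivAt (fun u : ℝ => (S + u)^2) (2 * S) 0 := by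
      have h1 : HasDerivAt (fun u : ℝ => S + u) 1 0 := by
        simpa using (hasDerivAt_id (0:ℝ)).const_add S
      have := h1.fun_pow 2
      simpa using this
    have : HasDerivAt (fun u : ℝ => (c * (S + u) - (T + cm * u)) / (S + u)^2) _ 0 := hnum.div hdf (by simpa using pow_ne_zero 2 hS)
    convert this using 1
    norm_num
  -- now compute the four quantities
  have hγd : DifferentiableAt ℝ γ 0 := aux_gamma g hg (h v) w W
  have hkey : ∀ (e : Fin k → ℝ) (c : ℝ),
      (∀ u : ℝ, |u| < δ → fderiv ℝ h v e * γ u = (c * (S + u) - (T + cm * u)) / (S + u)^2) →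
      fderiv ℝ h v e * γ 0 = (c * S - T) / S^2 ∧
      fderiv ℝ h v e * deriv γ 0 = ((c - cm) * S^2 - (c * S - T) * (2 * S)) / (S^2)^2 := by
    intro e c hAe
    constructor
    · have := hAe 0 (by simpa using hδ)
      simpa using this
    · have hev : (fun u : ℝ => fderiv ℝ h v e * γ u)
          =ᶠ[nhds (0:ℝ)] (fun u : ℝ => (c * (S + u) - (T + cm * u)) / (S + u)^2) := by
        filter_upwards [Metric.ball_mem_nhds (0:ℝ) hδ] with u hu
        exact hAe u (by simpa [Real.dist_eq] using hu)
      have e1 : deriv (fun u : ℝ => fderiv ℝ h v e * γ u) 0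
          = ((c - cm) * S^2 - (c * S - T) * (2 * S)) / (S^2)^2 := by
        rw [hev.deriv_eq]; exact (hder c).deriv
      rw [deriv_const_mul _ hγd] at e1
      exact e1
  obtain ⟨e10, e11⟩ := hkey E0 ca hA0
  obtain ⟨e20, e21⟩ := hkey E1 cb hA1
  -- cross identity
  have hcross : (ca * S - T) / S^2 * (((cb - cm) * S^2 - (cb * S - T) * (2 * S)) / (S^2)^2)
      = (cb * S - T) / S^2 * (((ca - cm) * S^2 - (ca * S - T) * (2 * S)) / (S^2)^2) := by
    rw [← e10, ← e11, ← e20, ← e21]; ring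
  have hS2 : S^2 ≠ 0 := pow_ne_zero 2 hS
  field_simp at hcross
  have hfin : S ^ 2 * ((ca - cb) * (T - cm * S)) = 0 := by
    linear_combination S * hcross
  rcases mul_eq_zero.1 hfin with h0 | hfin2
  · exact absurd h0 hS2
  rcases mul_eq_zero.1 hfin2 with h1 | h2
  · exact absurd (by linarith : ca = cb) hab
  · linarith

set_option maxHeartbeats 1000000 in
/-- The `n`-quasigroup
`F(x) = (x₁ + 2x₂ + … + n·xₙ)/(x₁ + … + xₙ)` is irreducible on every nonempty
connected open subset of `{x : x₁ + … + xₙ ≠ 0}`: for every permutation `σ` and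
every `k` with `2 ≤ k ≤ n−1` there is no decomposition
`F(x) = g(h(x_{σ(1)},…,x_{σ(k)}), x_{σ(k+1)},…,x_{σ(n)})` with C² `g`, `h`. -/
theorem stmt_8 (n : ℕ) (hn : 3 ≤ n)
    (F : (Fin n → ℝ) → ℝ)
    (hF : ∀ x, F x = (∑ i : Fin n, ((i.1 + 1 : ℕ) : ℝ) * x i) / (∑ i, x i))
    (U : Set (Fin n → ℝ)) (hUopen : IsOpen U) (hUconn : IsConnected U)
    (hden : ∀ x ∈ U, (∑ i, x i) ≠ 0) :
    ∀ (σ : Equiv.Perm (Fin n)) (k : ℕ) (hk2 : 2 ≤ k) (hkn : k ≤ n - 1),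
      ¬ ∃ (h : (Fin k → ℝ) → ℝ) (g : ℝ × (Fin (n - k) → ℝ) → ℝ),
          ContDiff ℝ 2 h ∧ ContDiff ℝ 2 g ∧
          ∀ x ∈ U, F x = g (h (fun i => x (σ (Fin.castLE (by omega) i))),
            fun j => x (σ ⟨k + j.1, by have := j.2; omega⟩)) := by
  intro σ k hk2 hkn
  rintro ⟨h, g, hh, hg, heq⟩
  have hkn' : k ≤ n := by omega
  obtain ⟨c, hc⟩ : ∃ c : Fin n → ℝ, c = fun i => ((i.1 + 1 : ℕ) : ℝ) := ⟨_, rfl⟩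
  have hcF : ∀ x, F x = (∑ i, c i * x i) / (∑ i, x i) := by
    intro x; rw [hF x]; simp only [hc]
  have hcinj : ∀ i j : Fin n, c i = c j → i = j := by
    intro i j hij
    simp only [hc] at hij
    have : i.1 + 1 = j.1 + 1 := by exact_mod_cast hij
    exact Fin.ext (by omega)
  obtain ⟨a, ha⟩ : ∃ y : Fin n, y = σ (Fin.castLE hkn' ⟨0, by omega⟩) := ⟨_, rfl⟩
  obtain ⟨b, hb⟩ : ∃ y : Fin n, y = σ (Fin.castLE hkn' ⟨1, by omega⟩) := ⟨_, rfl⟩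
  obtain ⟨m, hm⟩ : ∃ y : Fin n, y = σ ⟨k, by omega⟩ := ⟨_, rfl⟩
  have hab : a ≠ b := by
    intro hcon
    have := σ.injective ((ha.symm.trans hcon).trans hb)
    simp [Fin.ext_iff] at this
  have ham : a ≠ m := by
    intro hcon
    have := σ.injective ((ha.symm.trans hcon).trans hm)
    simp [Fin.ext_iff] at this
    omega
  have hbm : b ≠ m := by
    intro hcon
    have := σ.injective ((hb.symm.trans hcon).trans hm)
    simp [Fin.ext_iff] at this
    omega
  have hcab : c a ≠ c b := fun hcc => hab (hcinj _ _ hcc)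
  have hcam : c a ≠ c m := fun hcc => ham (hcinj _ _ hcc)
  -- the key fact: F is constantly `c m` on U
  have key : ∀ q ∈ U, (∑ i, c i * q i) = c m * ∑ i, q i := by
    intro q hq
    obtain ⟨ε, hε, hball⟩ := Metric.isOpen_iff.1 hUopen q hq
    have habs : ∀ s t u : ℝ, |s| < ε → |t| < ε → |u| < ε →
        (fun i => q i + (if i = a then s else 0) + (if i = b then t else 0)
          + (if i = m then u else 0)) ∈ U := by
      intro s t u hs ht hu
      apply hball
      rw [Metric.mem_ball, dist_pi_lt_iff hε]
      intro i
      rw [Real.dist_eq]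
      by_cases hia : i = a
      · have e : q i + (if i = a then s else 0) + (if i = b then t else 0)
            + (if i = m then u else 0) - q i = s := by
          rw [if_pos hia, if_neg (fun hib => hab (hia.symm.trans hib)),
            if_neg (fun him => ham (hia.symm.trans him))]; ring
        rw [e]; exact hs
      by_cases hib : i = b
      · have e : q i + (if i = a then s else 0) + (if i = b then t else 0)
            + (if i = m then u else 0) - q i = t := by
          rw [if_pos hib, if_neg hia, if_neg (fun him => hbm (hib.symm.trans him))]; ring
        rw [e]; exact ht
      by_cases him : i = m
      · have e : q i + (if i = a then s else 0) + (if i = b then t else 0)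
            + (if i = m then u else 0) - q i = u := by
          rw [if_pos him, if_neg hia, if_neg hib]; ring
        rw [e]; exact hu
      · have e : q i + (if i = a then s else 0) + (if i = b then t else 0)
            + (if i = m then u else 0) - q i = 0 := by
          rw [if_neg hia, if_neg hib, if_neg him]; ring
        rw [e]; simpa using hε
    have hsum : ∀ s t u : ℝ, ∑ i, (q i + (if i = a then s else 0) + (if i = b then t else 0)
        + (if i = m then u else 0)) = (∑ i, q i) + s + t + u := by
      intro s t u
      rw [Finset.sum_add_distrib, Finset.sum_add_distrib, Finset.sum_add_distrib]
      simp [Finset.sum_ite_eq']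
    have hwsum : ∀ s t u : ℝ, ∑ i, c i * (q i + (if i = a then s else 0)
        + (if i = b then t else 0) + (if i = m then u else 0))
        = (∑ i, c i * q i) + c a * s + c b * t + c m * u := by
      intro s t u
      simp only [mul_add, mul_ite, mul_zero]
      rw [Finset.sum_add_distrib, Finset.sum_add_distrib, Finset.sum_add_distrib]
      simp [Finset.sum_ite_eq']
    have hargA : ∀ s t u : ℝ,
        (fun i : Fin k => q (σ (Fin.castLE hkn' i))
          + (if σ (Fin.castLE hkn' i) = a then s else 0)
          + (if σ (Fin.castLE hkn' i) = b then t else 0)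
          + (if σ (Fin.castLE hkn' i) = m then u else 0))
        = ((fun i => q (σ (Fin.castLE hkn' i))) : Fin k → ℝ)
          + s • (Pi.single (⟨0, by omega⟩ : Fin k) (1:ℝ) : Fin k → ℝ)
          + t • (Pi.single (⟨1, by omega⟩ : Fin k) (1:ℝ) : Fin k → ℝ) := by
      intro s t u
      funext i
      have ea : σ (Fin.castLE hkn' i) = a ↔ i = (⟨0, by omega⟩ : Fin k) := by
        constructor
        · intro h'
          have h2 := σ.injective (h'.trans ha)
          simpa [Fin.ext_iff] using h2
        · rintro rfl
          exact ha.symm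
      have eb : σ (Fin.castLE hkn' i) = b ↔ i = (⟨1, by omega⟩ : Fin k) := by
        constructor
        · intro h'
          have h2 := σ.injective (h'.trans hb)
          simpa [Fin.ext_iff] using h2
        · rintro rfl
          exact hb.symm
      have em : ¬ (σ (Fin.castLE hkn' i) = m) := by
        intro h'
        have h2 := σ.injective (h'.trans hm)
        have := i.2
        simp [Fin.ext_iff] at h2
        omega
      simp only [Pi.add_apply, Pi.smul_apply, Pi.single_apply, smul_eq_mul,
        ea, eb, em, if_false, mul_ite, mul_one, mul_zero, add_zero]
    have hargB : ∀ s t u : ℝ,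
        (fun j : Fin (n - k) => q (σ (⟨k + j.1, by have := j.2; omega⟩ : Fin n))
          + (if σ (⟨k + j.1, by have := j.2; omega⟩ : Fin n) = a then s else 0)
          + (if σ (⟨k + j.1, by have := j.2; omega⟩ : Fin n) = b then t else 0)
          + (if σ (⟨k + j.1, by have := j.2; omega⟩ : Fin n) = m then u else 0))
        = ((fun j : Fin (n - k) => q (σ (⟨k + j.1, by have := j.2; omega⟩ : Fin n))) : Fin (n - k) → ℝ)
          + u • (Pi.single (⟨0, by omega⟩ : Fin (n - k)) (1:ℝ) : Fin (n - k) → ℝ) := by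
      intro s t u
      funext j
      have ea : ¬ (σ (⟨k + j.1, by have := j.2; omega⟩ : Fin n) = a) := by
        intro h'
        have h2 := σ.injective (h'.trans ha)
        simp [Fin.ext_iff] at h2
        omega
      have eb : ¬ (σ (⟨k + j.1, by have := j.2; omega⟩ : Fin n) = b) := by
        intro h'
        have h2 := σ.injective (h'.trans hb)
        simp [Fin.ext_iff] at h2
        omega
      have em : σ (⟨k + j.1, by have := j.2; omega⟩ : Fin n) = m
          ↔ j = (⟨0, by omega⟩ : Fin (n - k)) := by
        constructor
        · intro h'
          have h2 := σ.injective (h'.trans hm)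
          simp [Fin.ext_iff] at h2 ⊢
          omega
        · intro hj
          have hv : (⟨k + j.1, by have := j.2; omega⟩ : Fin n) = (⟨k, by omega⟩ : Fin n) := by
            apply Fin.ext
            simp [hj]
          rw [hv]
          exact hm.symm
      simp only [Pi.add_apply, Pi.smul_apply, Pi.single_apply, smul_eq_mul,
        ea, eb, em, if_false, mul_ite, mul_one, mul_zero, add_zero]
    refine abstract_key h g hh hg
      (fun i => q (σ (Fin.castLE hkn' i)))
      (Pi.single (⟨0, by omega⟩ : Fin k) (1:ℝ) : Fin k → ℝ)
      (Pi.single (⟨1, by omega⟩ : Fin k) (1:ℝ) : Fin k → ℝ)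
      (fun j : Fin (n - k) => q (σ (⟨k + j.1, by have := j.2; omega⟩ : Fin n)))
      (Pi.single (⟨0, by omega⟩ : Fin (n - k)) (1:ℝ) : Fin (n - k) → ℝ)
      (∑ i, q i) (∑ i, c i * q i) (c a) (c b) (c m) (hden q hq) hcab ε hε ?_
    intro s t u hs ht hu
    have h0 := heq _ (habs s t u hs ht hu)
    rw [hcF] at h0
    simp only [hargA s t u, hargB s t u, hsum s t u, hwsum s t u] at h0
    exact h0
  -- derive the contradiction
  obtain ⟨p, hpU⟩ := hUconn.nonempty
  obtain ⟨ε, hε, hball⟩ := Metric.isOpen_iff.1 hUopen p hpU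
  have hp'U : (fun i => p i + if i = a then ε/2 else 0) ∈ U := by
    apply hball
    rw [Metric.mem_ball, dist_pi_lt_iff hε]
    intro i
    rw [Real.dist_eq]
    by_cases hia : i = a
    · have e : p i + (if i = a then ε/2 else 0) - p i = ε/2 := by
        rw [if_pos hia]; ring
      rw [e, abs_of_pos (by linarith)]; linarith
    · have e : p i + (if i = a then ε/2 else 0) - p i = 0 := by
        rw [if_neg hia]; ring
      rw [e]; simpa using hε
  have k1 := key p hpU
  have k2 := key _ hp'U
  have s1 : ∑ i, (p i + if i = a then ε/2 else 0) = (∑ i, p i) + ε/2 := by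
    rw [Finset.sum_add_distrib]
    simp [Finset.sum_ite_eq']
  have s2 : ∑ i, c i * (p i + if i = a then ε/2 else 0)
      = (∑ i, c i * p i) + c a * (ε/2) := by
    simp only [mul_add, mul_ite, mul_zero]
    rw [Finset.sum_add_distrib]
    simp [Finset.sum_ite_eq']
  rw [s1, s2] at k2
  have : c a = c m := by
    have hε2 : (ε/2 : ℝ) ≠ 0 := by positivity
    have h3 : (c a - c m) * (ε/2) = 0 := by linear_combination k2 - k1
    rcases mul_eq_zero.1 h3 with h4 | h4
    · linarith
    · exact absurd h4 hε2
  exact hcam this
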